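/- arXiv:1606.03638 — 2 statements merged into one kernel-verified Lean document; each statement's English description precedes it below -/
import Mathlib

section
/- The completely asymmetric pair Hamiltonian H^I(σ,τ) = -Σ_{i∈Λ} [J σ_i (τ_{i↑} + τ_{i→}) + q σ_i τ_i] on the two-dimensional discrete torus satisfies the dynamical balance condition: Σ_τ e^{-H^I(σ,τ)} = Σ_τ e^{-H^I(τ,σ)} for every configuration σ. -/
/-- spin value of a Boolean configuration entry -/
def spin (b : Bool) : ℝ := if b then 1 else -1

/-- the completely asymmetric pair Hamiltonian on the torus `(ℤ/Lℤ)²`: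
`H^I(σ,τ) = -Σ_i [J σ_i (τ_{i↑} + τ_{i→}) + q σ_i τ_i]`. -/
noncomputable def HI (L : ℕ) [NeZero L] (J q : ℝ) (σ τ : ZMod L × ZMod L → ℝ) : ℝ :=
  -∑ i : ZMod L × ZMod L,
    (J * σ i * (τ (i.1, i.2 + 1) + τ (i.1 + 1, i.2)) + q * σ i * τ i)

section aux

variable {L : ℕ} [NeZero L]

local notation "Λ" => ZMod L × ZMod L

/-- `E x = e^x + e^{-x}` -/
noncomputable def Ee (x : ℝ) : ℝ := Real.exp x + Real.exp (-x)

lemma Ee_neg (x : ℝ) : Ee (-x) = Ee x := by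
  simp [Ee, add_comm]

/-- indicator -/
def nb (b : Bool) : ℕ := if b then 1 else 0

lemma sum_exp (c : Λ → ℝ) :
    (∑ τ : Λ → Bool, Real.exp (∑ i : Λ, spin (τ i) * c i)) = ∏ i : Λ, Ee (c i) := by
  have h1 : ∀ τ : Λ → Bool,
      Real.exp (∑ i : Λ, spin (τ i) * c i) = ∏ i : Λ, Real.exp (spin (τ i) * c i) := by
    intro τ; rw [Real.exp_sum]
  simp_rw [h1]
  have h2 : (∏ i : Λ, ∑ b : Bool, Real.exp (spin b * c i))
      = ∑ τ ∈ Fintype.piFinset (fun _ : Λ => (Finset.univ : Finset Bool)),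
          ∏ i : Λ, Real.exp (spin (τ i) * c i) := Finset.prod_univ_sum _ _
  rw [Fintype.piFinset_univ] at h2
  rw [← h2]
  refine Finset.prod_congr rfl fun i _ => ?_
  rw [Fintype.sum_bool]
  simp [spin, Ee]

lemma HI_left (J q : ℝ) (s t : Λ → ℝ) :
    -(HI L J q s t)
      = ∑ i : Λ, t i * (J * s (i.1, i.2 - 1) + J * s (i.1 - 1, i.2) + q * s i) := by
  unfold HI
  rw [neg_neg]
  have split : ∀ i : Λ,
      J * s i * (t (i.1, i.2 + 1) + t (i.1 + 1, i.2)) + q * s i * t i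
        = J * s i * t (i.1, i.2 + 1) + (J * s i * t (i.1 + 1, i.2) + q * s i * t i) := by
    intro i; ring
  simp_rw [split]
  rw [Finset.sum_add_distrib, Finset.sum_add_distrib]
  have e2 : (∑ i : Λ, J * s (i.1, i.2 - 1) * t i) = ∑ i : Λ, J * s i * t (i.1, i.2 + 1) := by
    refine Fintype.sum_equiv (Equiv.prodCongr (Equiv.refl (ZMod L)) (Equiv.subRight 1))
      _ (fun i => J * s i * t (i.1, i.2 + 1)) fun i => ?_
    simp [Prod.map, sub_add_cancel]
  have e1 : (∑ i : Λ, J * s (i.1 - 1, i.2) * t i) = ∑ i : Λ, J * s i * t (i.1 + 1, i.2) := by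
    refine Fintype.sum_equiv (Equiv.prodCongr (Equiv.subRight 1) (Equiv.refl (ZMod L)))
      _ (fun i => J * s i * t (i.1 + 1, i.2)) fun i => ?_
    simp [Prod.map, sub_add_cancel]
  rw [← e1, ← e2, ← Finset.sum_add_distrib, ← Finset.sum_add_distrib]
  refine Finset.sum_congr rfl fun i _ => ?_
  ring

lemma HI_right (J q : ℝ) (s t : Λ → ℝ) :
    -(HI L J q t s)
      = ∑ i : Λ, t i * (J * s (i.1, i.2 + 1) + J * s (i.1 + 1, i.2) + q * s i) := by
  unfold HI
  rw [neg_neg]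
  refine Finset.sum_congr rfl fun i _ => ?_
  ring

lemma spin_not (a : Bool) : spin (!a) = -spin a := by cases a <;> simp [spin]

/-- reduce a per-site factor to a function of the two agreement booleans -/
lemma Ee_reduce (J q : ℝ) (a b c : Bool) :
    Ee (J * spin a + J * spin b + q * spin c)
      = Ee (J * spin (a == c) + J * spin (b == c) + q) := by
  cases c
  · have h : J * spin (a == false) + J * spin (b == false) + q
        = -(J * spin a + J * spin b + q * spin false) := by
      cases a <;> cases b <;> simp [spin] <;> ring
    rw [h, Ee_neg]
  · simp [spin]

/-- the key combinatorial lemma: products of a symmetric site factor agree when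
the three pair-counts agree. -/
lemma prod_pair (g : Bool → Bool → ℝ) (hs : g true false = g false true)
    (A B A' B' : Λ → Bool)
    (hA : (∑ i : Λ, nb (A i)) = ∑ i : Λ, nb (A' i))
    (hB : (∑ i : Λ, nb (B i)) = ∑ i : Λ, nb (B' i))
    (hE : (∑ i : Λ, nb (A i == B i)) = ∑ i : Λ, nb (A' i == B' i)) :
    (∏ i : Λ, g (A i) (B i)) = ∏ i : Λ, g (A' i) (B' i) := by
  have hg : ∀ a b : Bool, g a b
      = g true true ^ nb (a && b) * g true false ^ nb (a != b)
        * g false false ^ nb (!a && !b) := by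
    intro a b; cases a <;> cases b <;> simp [nb] <;> rw [← hs]
  have key : ∀ (X Y : Λ → Bool),
      (∏ i : Λ, g (X i) (Y i))
        = g true true ^ (∑ i : Λ, nb (X i && Y i))
          * g true false ^ (∑ i : Λ, nb (X i != Y i))
          * g false false ^ (∑ i : Λ, nb (!X i && !Y i)) := by
    intro X Y
    rw [Finset.prod_congr rfl fun i _ => hg (X i) (Y i)]
    rw [Finset.prod_mul_distrib, Finset.prod_mul_distrib,
      Finset.prod_pow_eq_pow_sum, Finset.prod_pow_eq_pow_sum, Finset.prod_pow_eq_pow_sum]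
  rw [key, key]
  -- now show the three exponent sums agree
  have lin : ∀ (X Y : Λ → Bool),
      (∑ i : Λ, (2 * nb (X i && Y i) + 1)) = ∑ i : Λ, (nb (X i) + nb (Y i) + nb (X i == Y i))
      ∧ (∑ i : Λ, (nb (X i != Y i) + nb (X i == Y i))) = ∑ i : Λ, 1
      ∧ (∑ i : Λ, (2 * nb (!X i && !Y i) + 1 + nb (X i) + nb (Y i)))
          = ∑ i : Λ, (nb (X i == Y i) + 2) := by
    intro X Y
    refine ⟨Finset.sum_congr rfl fun i _ => ?_, Finset.sum_congr rfl fun i _ => ?_,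
      Finset.sum_congr rfl fun i _ => ?_⟩ <;> cases hx : X i <;> cases hy : Y i <;> rfl
  obtain ⟨l1, l2, l3⟩ := lin A B
  obtain ⟨l1', l2', l3'⟩ := lin A' B'
  simp only [Finset.sum_add_distrib, Finset.sum_const, Finset.card_univ, smul_eq_mul,
    mul_one, ← Finset.mul_sum] at l1 l2 l3 l1' l2' l3'
  have h1 : (∑ i : Λ, nb (A i && B i)) = ∑ i : Λ, nb (A' i && B' i) := by omega
  have h2 : (∑ i : Λ, nb (A i != B i)) = ∑ i : Λ, nb (A' i != B' i) := by omega
  have h3 : (∑ i : Λ, nb (!A i && !B i)) = ∑ i : Λ, nb (!A' i && !B' i) := by omega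
  rw [h1, h2, h3]

end aux

/-- `H^I` satisfies the dynamical balance condition
`Σ_τ e^{-H^I(σ,τ)} = Σ_τ e^{-H^I(τ,σ)}`. -/
theorem stmt_3 (L : ℕ) [NeZero L] (J q : ℝ) (σ : ZMod L × ZMod L → Bool) :
    (∑ τ : ZMod L × ZMod L → Bool,
        Real.exp (-(HI L J q (fun i => spin (σ i)) (fun i => spin (τ i)))))
      = ∑ τ : ZMod L × ZMod L → Bool,
        Real.exp (-(HI L J q (fun i => spin (τ i)) (fun i => spin (σ i)))) := by
  set s : ZMod L × ZMod L → ℝ := fun i => spin (σ i) with hs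
  have lhs : (∑ τ : ZMod L × ZMod L → Bool,
      Real.exp (-(HI L J q s (fun i => spin (τ i)))))
      = ∏ i : ZMod L × ZMod L,
          Ee (J * s (i.1, i.2 - 1) + J * s (i.1 - 1, i.2) + q * s i) := by
    simp_rw [HI_left]
    exact sum_exp _
  have rhs : (∑ τ : ZMod L × ZMod L → Bool,
      Real.exp (-(HI L J q (fun i => spin (τ i)) s)))
      = ∏ i : ZMod L × ZMod L,
          Ee (J * s (i.1, i.2 + 1) + J * s (i.1 + 1, i.2) + q * s i) := by
    simp_rw [HI_right]
    exact sum_exp _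
  rw [lhs, rhs]
  -- reduce each factor to agreement booleans
  have redL : ∀ i : ZMod L × ZMod L,
      Ee (J * s (i.1, i.2 - 1) + J * s (i.1 - 1, i.2) + q * s i)
        = Ee (J * spin (σ (i.1, i.2 - 1) == σ i) + J * spin (σ (i.1 - 1, i.2) == σ i) + q) := by
    intro i
    have := Ee_reduce J q (σ (i.1, i.2 - 1)) (σ (i.1 - 1, i.2)) (σ i)
    simpa [hs] using this
  have redR : ∀ i : ZMod L × ZMod L,
      Ee (J * s (i.1, i.2 + 1) + J * s (i.1 + 1, i.2) + q * s i)
        = Ee (J * spin (σ (i.1, i.2 + 1) == σ i) + J * spin (σ (i.1 + 1, i.2) == σ i) + q) := by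
    intro i
    have := Ee_reduce J q (σ (i.1, i.2 + 1)) (σ (i.1 + 1, i.2)) (σ i)
    simpa [hs] using this
  simp_rw [redL, redR]
  refine prod_pair (fun u v => Ee (J * spin u + J * spin v + q)) (by ring_nf)
    (fun i => σ (i.1, i.2 - 1) == σ i) (fun i => σ (i.1 - 1, i.2) == σ i)
    (fun i => σ (i.1, i.2 + 1) == σ i) (fun i => σ (i.1 + 1, i.2) == σ i) ?_ ?_ ?_
  · refine Fintype.sum_equiv (Equiv.prodCongr (Equiv.refl (ZMod L)) (Equiv.subRight 1))
      _ (fun i => nb (σ (i.1, i.2 + 1) == σ i)) fun i => ?_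
    simp [Prod.map, sub_add_cancel, Bool.beq_comm]
  · refine Fintype.sum_equiv (Equiv.prodCongr (Equiv.subRight 1) (Equiv.refl (ZMod L)))
      _ (fun i => nb (σ (i.1 + 1, i.2) == σ i)) fun i => ?_
    simp [Prod.map, sub_add_cancel, Bool.beq_comm]
  · have hb : ∀ x y z : Bool, ((x == z) == (y == z)) = (x == y) := by decide
    simp_rw [hb]
    refine Fintype.sum_equiv (Equiv.prodCongr (Equiv.subRight 1) (Equiv.subRight 1))
      _ (fun i => nb (σ (i.1, i.2 + 1) == σ (i.1 + 1, i.2))) fun i => ?_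
    simp [Prod.map, sub_add_cancel, Bool.beq_comm]
end

section
/- The PCA stationary weight factorizes as w_PCA(σ) = w_G(σ) · f(σ) where f(σ) = Π_{i∈Λ}(1 + δ e^{-2 h_i(σ)σ_i}), provided Σ_{i∈Λ} h_i(σ)σ_i + G(σ) = -H(σ). Consequently π_PCA(σ) = π_G(σ) f(σ) / π_G(f), where π_G(f) = Σ_σ π_G(σ) f(σ). -/
/-- the pair Hamiltonian `H(σ,τ) = -Σ_i (h_i(σ)+qσ_i)τ_i - G(σ) + q|Λ|` -/
noncomputable def Hpair {Λ : Type*} [Fintype Λ] (h : Λ → (Λ → ℝ) → ℝ)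
    (G : (Λ → ℝ) → ℝ) (q : ℝ) (σ τ : Λ → ℝ) : ℝ :=
  -(∑ i, (h i σ + q * σ i) * τ i) - G σ + q * (Fintype.card Λ)

/-- `w_PCA(σ) = Σ_τ e^{-H(σ,τ)}` -/
noncomputable def wPCA {Λ : Type*} [Fintype Λ] [DecidableEq Λ] (h : Λ → (Λ → ℝ) → ℝ)
    (G : (Λ → ℝ) → ℝ) (q : ℝ) (σ : Λ → ℝ) : ℝ :=
  ∑ τ : Λ → Bool, Real.exp (-(Hpair h G q σ (fun i => spin (τ i))))

/-- `f(σ) = Π_i (1 + δ e^{-2 h_i(σ) σ_i})`, `δ = e^{-2q}` -/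
noncomputable def fwt {Λ : Type*} [Fintype Λ] (h : Λ → (Λ → ℝ) → ℝ) (q : ℝ)
    (σ : Λ → ℝ) : ℝ :=
  ∏ i, (1 + Real.exp (-(2 * q)) * Real.exp (-(2 * h i σ * σ i)))

lemma key_fact {Λ : Type*} [Fintype Λ] [DecidableEq Λ]
    (H : (Λ → ℝ) → ℝ) (h : Λ → (Λ → ℝ) → ℝ) (G : (Λ → ℝ) → ℝ) (q : ℝ)
    (hcomp : ∀ σ : Λ → Bool,
      (∑ i, h i (fun j => spin (σ j)) * spin (σ i)) + G (fun j => spin (σ j))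
        = -H (fun j => spin (σ j)))
    (σ' : Λ → Bool) :
    wPCA h G q (fun j => spin (σ' j))
      = Real.exp (-H (fun j => spin (σ' j))) * fwt h q (fun j => spin (σ' j)) := by
  set s : Λ → ℝ := fun j => spin (σ' j) with hs_def
  have hc : (∑ i, h i s * s i) + G s = -H s := hcomp σ'
  have hs : ∀ i, s i = 1 ∨ s i = -1 := fun i => by
    simp only [hs_def, spin]; by_cases hb : σ' i <;> simp [hb]
  unfold wPCA Hpair
  have e1 : ∀ τ : Λ → Bool,
      Real.exp (-(-(∑ i, (h i s + q * s i) * spin (τ i)) - G s + q * (Fintype.card Λ)))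
        = (∏ i, Real.exp ((h i s + q * s i) * spin (τ i)))
            * (Real.exp (G s) * Real.exp (-(q * (Fintype.card Λ)))) := by
    intro τ
    rw [← Real.exp_sum, ← Real.exp_add, ← Real.exp_add]
    congr 1
    ring
  simp_rw [e1]
  rw [← Finset.sum_mul]
  have e2 : (∑ τ : Λ → Bool, ∏ i, Real.exp ((h i s + q * s i) * spin (τ i)))
      = ∏ i, ∑ b : Bool, Real.exp ((h i s + q * s i) * spin b) := by
    rw [Finset.prod_univ_sum, Fintype.piFinset_univ]
  rw [e2]
  have e3 : ∀ i : Λ, (∑ b : Bool, Real.exp ((h i s + q * s i) * spin b))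
      = Real.exp (h i s * s i + q)
          * (1 + Real.exp (-(2 * q)) * Real.exp (-(2 * h i s * s i))) := by
    intro i
    rw [Fintype.sum_bool]
    have st : spin true = 1 := rfl
    have sf : spin false = -1 := rfl
    rcases hs i with hh | hh <;>
      simp only [hh, st, sf] <;>
      rw [mul_add, ← Real.exp_add, ← Real.exp_add] <;> ring_nf
  simp_rw [e3]
  rw [Finset.prod_mul_distrib, ← Real.exp_sum, Finset.sum_add_distrib,
    Finset.sum_const, nsmul_eq_mul, Finset.card_univ]
  rw [← hc]
  unfold fwt
  have comb : Real.exp (∑ x, h x s * s x + (Fintype.card Λ : ℝ) * q) * Real.exp (G s)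
      * Real.exp (-(q * (Fintype.card Λ)))
      = Real.exp ((∑ i, h i s * s i) + G s) := by
    rw [← Real.exp_add, ← Real.exp_add]
    congr 1
    ring
  rw [← comb]
  ring

/-- provided `Σ_i h_i(σ)σ_i + G(σ) = -H(σ)` on configurations, the PCA weight
factorizes as `w_PCA(σ) = w_G(σ) f(σ)`, and consequently
`π_PCA(σ) = π_G(σ) f(σ)/π_G(f)`. -/
theorem stmt_7 {Λ : Type*} [Fintype Λ] [DecidableEq Λ]
    (H : (Λ → ℝ) → ℝ) (h : Λ → (Λ → ℝ) → ℝ) (G : (Λ → ℝ) → ℝ) (q : ℝ)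
    (hcomp : ∀ σ : Λ → Bool,
      (∑ i, h i (fun j => spin (σ j)) * spin (σ i)) + G (fun j => spin (σ j))
        = -H (fun j => spin (σ j)))
    (σ : Λ → Bool) :
    wPCA h G q (fun j => spin (σ j))
        = Real.exp (-H (fun j => spin (σ j))) * fwt h q (fun j => spin (σ j)) ∧
      wPCA h G q (fun j => spin (σ j)) /
          (∑ σ' : Λ → Bool, wPCA h G q (fun j => spin (σ' j)))
        = (Real.exp (-H (fun j => spin (σ j))) /
              (∑ σ' : Λ → Bool, Real.exp (-H (fun j => spin (σ' j))))) *
            fwt h q (fun j => spin (σ j)) /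
            (∑ σ' : Λ → Bool,
              (Real.exp (-H (fun j => spin (σ' j))) /
                  (∑ σ'' : Λ → Bool, Real.exp (-H (fun j => spin (σ'' j))))) *
                fwt h q (fun j => spin (σ' j))) := by
  have key := key_fact H h G q hcomp
  refine ⟨key σ, ?_⟩
  have hfpos : ∀ σ' : Λ → Bool, 0 < fwt h q (fun j => spin (σ' j)) := by
    intro σ'
    exact Finset.prod_pos fun i _ => by positivity
  have hZ : (0:ℝ) < ∑ σ'' : Λ → Bool, Real.exp (-H (fun j => spin (σ'' j))) :=
    Finset.sum_pos (fun _ _ => Real.exp_pos _) Finset.univ_nonempty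
  have hS : (0:ℝ) < ∑ σ' : Λ → Bool,
      Real.exp (-H (fun j => spin (σ' j))) * fwt h q (fun j => spin (σ' j)) :=
    Finset.sum_pos (fun σ' _ => mul_pos (Real.exp_pos _) (hfpos σ')) Finset.univ_nonempty
  simp_rw [key]
  rw [show (∑ σ' : Λ → Bool,
      (Real.exp (-H (fun j => spin (σ' j))) /
          (∑ σ'' : Λ → Bool, Real.exp (-H (fun j => spin (σ'' j))))) *
        fwt h q (fun j => spin (σ' j)))
    = (∑ σ' : Λ → Bool,
        Real.exp (-H (fun j => spin (σ' j))) * fwt h q (fun j => spin (σ' j))) /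
      (∑ σ'' : Λ → Bool, Real.exp (-H (fun j => spin (σ'' j)))) by
      rw [Finset.sum_div]; exact Finset.sum_congr rfl fun σ' _ => by ring]
  field_simp
end
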